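/- Let f : ℝⁿ → ℝ be D-Lipschitz with D ≥ 0, and let μ > 0. Then for all x, x' ∈ ℝⁿ, the gradient-free oracle satisfies the mean Lipschitz bound ∫ ‖π_x(ξ) − π_{x'}(ξ)‖ dγ(ξ) ≤ (2·D·√n/μ)·‖x − x'‖. -/

import Mathlib

open MeasureTheory ProbabilityTheory
open Real


theorem aux_ioi : ∫ x in Set.Ioi (0:ℝ), x ^ 2 * Real.exp (-(1/2) * x ^ 2) = Real.sqrt (2*π) / 2 := by
  have h2 : ∀ x : ℝ, x ^ (2:ℝ) = x ^ 2 := fun x => by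
    rw [show (2:ℝ) = ((2:ℕ):ℝ) by norm_num, Real.rpow_natCast]
  have h := integral_rpow_mul_exp_neg_mul_rpow (p := 2) (q := 2) (b := 1/2)
    (by norm_num) (by norm_num) (by norm_num)
  simp only [h2] at h
  rw [h, show ((2:ℝ)+1)/2 = 1/2 + 1 by norm_num,
    Real.Gamma_add_one (by norm_num : (1/2:ℝ) ≠ 0), Real.Gamma_one_half_eq,
    show (-((2:ℝ)+1)/2 : ℝ) = -(3/2) by norm_num,
    one_div, Real.inv_rpow (by norm_num), ← Real.rpow_neg (by norm_num), neg_neg,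
    show (3/2:ℝ) = 1 + 1/2 by norm_num, Real.rpow_add (by norm_num), Real.rpow_one,
    ← Real.sqrt_eq_rpow, Real.sqrt_mul (by norm_num : (0:ℝ) ≤ 2)]
  ring

theorem aux_integrand_eq (x : ℝ) :
    gaussianPDFReal 0 1 x * x ^ 2 = (Real.sqrt (2*π))⁻¹ * (x ^ 2 * Real.exp (-(1/2) * x ^ 2)) := by
  simp only [gaussianPDFReal, sub_zero, NNReal.coe_one, mul_one]
  ring_nf

theorem aux_integrable_sq_mul : Integrable (fun x : ℝ => x ^ 2 * Real.exp (-(1/2) * x ^ 2)) := by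
  have h2 : ∀ x : ℝ, x ^ (2:ℝ) = x ^ 2 := fun x => by
    rw [show (2:ℝ) = ((2:ℕ):ℝ) by norm_num, Real.rpow_natCast]
  have := integrable_rpow_mul_exp_neg_mul_sq (b := 1/2) (by norm_num) (s := 2) (by norm_num)
  simpa only [h2] using this

theorem aux_integrable_pdf_sq :
    Integrable (fun x : ℝ => gaussianPDFReal 0 1 x * x ^ 2) := by
  simp only [aux_integrand_eq]
  exact aux_integrable_sq_mul.const_mul _

theorem gauss_sq_int : ∫ x, x ^ 2 ∂(gaussianReal 0 1) = 1 := by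
  rw [gaussianReal_of_var_ne_zero 0 one_ne_zero]
  have hmeas : Measurable fun x : ℝ => (gaussianPDFReal 0 1 x).toNNReal :=
    (measurable_gaussianPDFReal 0 1).real_toNNReal
  have : ∫ x, x ^ 2 ∂(volume.withDensity (gaussianPDF 0 1))
      = ∫ x, (gaussianPDFReal 0 1 x).toNNReal • x ^ 2 := by
    exact integral_withDensity_eq_integral_smul hmeas _
  rw [this]
  have : ∀ x : ℝ, (gaussianPDFReal 0 1 x).toNNReal • x ^ 2 = gaussianPDFReal 0 1 x * x ^ 2 := by
    intro x
    rw [NNReal.smul_def, smul_eq_mul, Real.coe_toNNReal _ (gaussianPDFReal_nonneg _ _ _)]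
  simp only [this, aux_integrand_eq]
  rw [integral_const_mul]
  have habs : ∫ a : ℝ, a ^ 2 * Real.exp (-(1/2) * a ^ 2)
      = ∫ a : ℝ, |a| ^ 2 * Real.exp (-(1/2) * |a| ^ 2) := by
    congr 1; ext a; rw [sq_abs]
  rw [habs, integral_comp_abs (f := fun x => x ^ 2 * Real.exp (-(1/2) * x ^ 2)), aux_ioi]
  have hpos : (0:ℝ) < Real.sqrt (2*π) := Real.sqrt_pos.mpr (by positivity)
  field_simp

theorem gauss_sq_integrable : Integrable (fun x : ℝ => x ^ 2) (gaussianReal 0 1) := by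
  rw [gaussianReal_of_var_ne_zero 0 one_ne_zero]
  have hmeas : Measurable fun x : ℝ => (gaussianPDFReal 0 1 x).toNNReal :=
    (measurable_gaussianPDFReal 0 1).real_toNNReal
  rw [show gaussianPDF 0 1 = fun x => ((gaussianPDFReal 0 1 x).toNNReal : ENNReal) from rfl,
    integrable_withDensity_iff_integrable_smul hmeas]
  have : ∀ x : ℝ, (gaussianPDFReal 0 1 x).toNNReal • x ^ 2 = gaussianPDFReal 0 1 x * x ^ 2 := by
    intro x
    rw [NNReal.smul_def, smul_eq_mul, Real.coe_toNNReal _ (gaussianPDFReal_nonneg _ _ _)]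
  simp only [this]
  exact aux_integrable_pdf_sq

theorem pi_map_eval (n : ℕ) (i : Fin n) :
    (Measure.pi fun _ : Fin n => gaussianReal 0 1).map (fun y => y i) = gaussianReal 0 1 := by
  refine Measure.ext fun s hs => ?_
  rw [Measure.map_apply (measurable_pi_apply i) hs]
  have : (fun y : Fin n → ℝ => y i) ⁻¹' s
      = Set.pi Set.univ (Function.update (fun _ => Set.univ) i s) := Set.eval_preimage
  rw [this, Measure.pi_pi]
  rw [Finset.prod_eq_single i (fun j _ hj => by simp [Function.update_of_ne hj])
    (fun h => absurd (Finset.mem_univ i) h)]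
  simp

/-- The standard Gaussian measure on `ℝⁿ` (Euclidean space), the product over the `n`
coordinates of the real Gaussian measure with mean 0 and variance 1. -/
noncomputable def stdGaussian (n : ℕ) : Measure (EuclideanSpace ℝ (Fin n)) :=
  (Measure.pi fun _ : Fin n => gaussianReal 0 1).map
    (MeasurableEquiv.toLp 2 (Fin n → ℝ))

instance stdGaussian_prob (n : ℕ) : IsProbabilityMeasure (stdGaussian n) := by
  unfold _root_.stdGaussian
  exact Measure.isProbabilityMeasure_map
    ((MeasurableEquiv.toLp 2 (Fin n → ℝ)).measurable.aemeasurable)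

theorem norm_symm_sq (n : ℕ) (y : Fin n → ℝ) :
    ‖(MeasurableEquiv.toLp 2 (Fin n → ℝ)) y‖ ^ 2 = ∑ i, (y i) ^ 2 := by
  rw [EuclideanSpace.norm_eq, Real.sq_sqrt (by positivity)]
  refine Finset.sum_congr rfl fun i _ => ?_
  simp [MeasurableEquiv.coe_toLp, Real.norm_eq_abs, sq_abs]

theorem coord_sq_integrable (n : ℕ) (i : Fin n) :
    Integrable (fun y : Fin n → ℝ => (y i) ^ 2) (Measure.pi fun _ => gaussianReal 0 1) := by
  have h : Integrable (fun x : ℝ => x ^ 2)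
      ((Measure.pi fun _ : Fin n => gaussianReal 0 1).map (fun y => y i)) := by
    rw [pi_map_eval]; exact gauss_sq_integrable
  exact (integrable_map_measure (continuous_pow 2).aestronglyMeasurable
    (measurable_pi_apply i).aemeasurable).mp h

theorem stdGaussian_normsq_integrable (n : ℕ) :
    Integrable (fun ξ : EuclideanSpace ℝ (Fin n) => ‖ξ‖ ^ 2) (stdGaussian n) := by
  unfold _root_.stdGaussian
  refine (integrable_map_measure (continuous_norm.pow 2).aestronglyMeasurable
    (MeasurableEquiv.toLp 2 (Fin n → ℝ)).measurable.aemeasurable).mpr ?_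
  have : ((fun ξ : EuclideanSpace ℝ (Fin n) => ‖ξ‖ ^ 2)
      ∘ (MeasurableEquiv.toLp 2 (Fin n → ℝ)))
      = fun y : Fin n → ℝ => ∑ i, (y i) ^ 2 := funext fun y => norm_symm_sq n y
  rw [show ((fun a : EuclideanSpace ℝ (Fin n) => ‖a‖) ^ 2) ∘ (MeasurableEquiv.toLp 2 (Fin n → ℝ)) = _ from this]
  exact integrable_finset_sum _ fun i _ => coord_sq_integrable n i

theorem stdGaussian_normsq (n : ℕ) :
    ∫ ξ, ‖ξ‖ ^ 2 ∂(stdGaussian n) = n := by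
  unfold _root_.stdGaussian
  rw [integral_map (MeasurableEquiv.toLp 2 (Fin n → ℝ)).measurable.aemeasurable
    (by exact (continuous_norm.pow 2).aestronglyMeasurable)]
  simp only [norm_symm_sq]
  rw [integral_finset_sum _ fun i _ => coord_sq_integrable n i]
  have : ∀ i : Fin n, ∫ y : Fin n → ℝ, (y i) ^ 2 ∂(Measure.pi fun _ => gaussianReal 0 1)
      = 1 := by
    intro i
    have := integral_map (μ := Measure.pi fun _ : Fin n => gaussianReal 0 1)
      (φ := fun y => y i) (f := fun x : ℝ => x ^ 2)
      (measurable_pi_apply i).aemeasurable (continuous_pow 2).aestronglyMeasurable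
    rw [pi_map_eval, gauss_sq_int] at this
    exact this.symm
  simp [this]

theorem stdGaussian_norm_memL2 (n : ℕ) :
    MemLp (fun ξ : EuclideanSpace ℝ (Fin n) => ‖ξ‖) 2 (stdGaussian n) :=
  (memLp_two_iff_integrable_sq continuous_norm.aestronglyMeasurable).mpr
    (stdGaussian_normsq_integrable n)

theorem stdGaussian_norm_int_le (n : ℕ) :
    ∫ ξ, ‖ξ‖ ∂(stdGaussian n) ≤ Real.sqrt n := by
  have hmem := stdGaussian_norm_memL2 n
  have hvar := variance_nonneg (fun ξ => ‖ξ‖) (stdGaussian n)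
  rw [variance_eq_sub hmem] at hvar
  simp only [Pi.pow_apply] at hvar
  have hsq : (∫ ξ, ‖ξ‖ ∂(stdGaussian n)) ^ 2 ≤ (n : ℝ) := by
    have := sub_nonneg.mp hvar
    calc (∫ ξ, ‖ξ‖ ∂(stdGaussian n)) ^ 2 ≤ ∫ ξ, ‖ξ‖ ^ 2 ∂(stdGaussian n) := this
      _ = n := stdGaussian_normsq n
  have hI : 0 ≤ ∫ ξ, ‖ξ‖ ∂(stdGaussian n) := integral_nonneg fun ξ => norm_nonneg _
  calc ∫ ξ, ‖ξ‖ ∂(stdGaussian n) = Real.sqrt ((∫ ξ, ‖ξ‖ ∂(stdGaussian n)) ^ 2) :=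
        (Real.sqrt_sq hI).symm
    _ ≤ Real.sqrt n := Real.sqrt_le_sqrt hsq

/-- The gradient-free oracle of `f` at `x` (with smoothing parameter `μ`) in the random
direction `ξ`. -/
noncomputable def oracle {n : ℕ} (f : EuclideanSpace ℝ (Fin n) → ℝ) (μ : ℝ)
    (x ξ : EuclideanSpace ℝ (Fin n)) : EuclideanSpace ℝ (Fin n) :=
  ((f (x + μ • ξ) - f x) / μ) • ξ

theorem stmt7 (n : ℕ) (hn : 1 ≤ n) (f : EuclideanSpace ℝ (Fin n) → ℝ) (D : ℝ) (hD : 0 ≤ D)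
    (hlip : ∀ x y : EuclideanSpace ℝ (Fin n), |f x - f y| ≤ D * ‖x - y‖)
    (μ : ℝ) (hμ : 0 < μ) :
    ∀ x x' : EuclideanSpace ℝ (Fin n),
      (∫ ξ, ‖oracle f μ x ξ - oracle f μ x' ξ‖ ∂(stdGaussian n))
        ≤ (2 * D * Real.sqrt n / μ) * ‖x - x'‖ := by
  intro x x'
  set C : ℝ := 2 * D * ‖x - x'‖ / μ with hCdef
  have hC : 0 ≤ C := by positivity
  have hpt : ∀ ξ : EuclideanSpace ℝ (Fin n),
      ‖oracle f μ x ξ - oracle f μ x' ξ‖ ≤ C * ‖ξ‖ := by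
    intro ξ
    have hdiff : oracle f μ x ξ - oracle f μ x' ξ
        = (((f (x + μ • ξ) - f x) - (f (x' + μ • ξ) - f x')) / μ) • ξ := by
      rw [oracle, oracle, ← sub_smul, div_sub_div_same]
    rw [hdiff, norm_smul, Real.norm_eq_abs, abs_div, abs_of_pos hμ]
    have habs : |(f (x + μ • ξ) - f x) - (f (x' + μ • ξ) - f x')| ≤ 2 * D * ‖x - x'‖ := by
      have h1 : |(f (x + μ • ξ) - f x) - (f (x' + μ • ξ) - f x')|
          ≤ |f (x + μ • ξ) - f (x' + μ • ξ)| + |f x - f x'| := by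
        have : (f (x + μ • ξ) - f x) - (f (x' + μ • ξ) - f x')
            = (f (x + μ • ξ) - f (x' + μ • ξ)) - (f x - f x') := by ring
        rw [this]
        exact abs_sub _ _
      have h2 := hlip (x + μ • ξ) (x' + μ • ξ)
      rw [add_sub_add_right_eq_sub] at h2
      have h3 := hlip x x'
      linarith
    calc |(f (x + μ • ξ) - f x) - (f (x' + μ • ξ) - f x')| / μ * ‖ξ‖
        ≤ (2 * D * ‖x - x'‖) / μ * ‖ξ‖ := by
          apply mul_le_mul_of_nonneg_right _ (norm_nonneg _)
          gcongr
      _ = C * ‖ξ‖ := rfl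
  have hint : Integrable (fun ξ : EuclideanSpace ℝ (Fin n) => ‖ξ‖) (stdGaussian n) :=
    (stdGaussian_norm_memL2 n).integrable one_le_two
  have hmono : (∫ ξ, ‖oracle f μ x ξ - oracle f μ x' ξ‖ ∂(stdGaussian n))
      ≤ ∫ ξ, C * ‖ξ‖ ∂(stdGaussian n) := by
    refine integral_mono_of_nonneg (ae_of_all _ fun ξ => norm_nonneg _)
      (hint.const_mul C) (ae_of_all _ hpt)
  calc (∫ ξ, ‖oracle f μ x ξ - oracle f μ x' ξ‖ ∂(stdGaussian n))
      ≤ ∫ ξ, C * ‖ξ‖ ∂(stdGaussian n) := hmono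
    _ = C * ∫ ξ, ‖ξ‖ ∂(stdGaussian n) := integral_const_mul C _
    _ ≤ C * Real.sqrt n := mul_le_mul_of_nonneg_left (stdGaussian_norm_int_le n) hC
    _ = (2 * D * Real.sqrt n / μ) * ‖x - x'‖ := by rw [hCdef]; ring
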